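/- The Hausdorff dimension of the space of pointed trees (X_2, d_2) associated to the free group F_2 on two generators is infinite: dim_H(X_2) = ∞. -/

import Mathlib

open Filter
open scoped ENNReal

noncomputable section

namespace GraphTrees

/-- The word length of an element of a free group: the length of its reduced word. -/
def wlen {n : ℕ} (g : FreeGroup (Fin n)) : ℕ := (FreeGroup.toWord g).length

/-- `h` is a prefix of `g`. -/
def IsPref {n : ℕ} (h g : FreeGroup (Fin n)) : Prop :=
  wlen h + wlen (h⁻¹ * g) = wlen g

/-- Vertex sets of infinite connected subtrees of the Cayley graph of the free group on
`n` generators which contain the identity: subsets containing `1`, infinite, and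
prefix-closed. -/
def IsTree {n : ℕ} (S : Set (FreeGroup (Fin n))) : Prop :=
  1 ∈ S ∧ S.Infinite ∧ ∀ g ∈ S, ∀ h : FreeGroup (Fin n), IsPref h g → h ∈ S

/-- The space `X n` of pointed trees. -/
def X (n : ℕ) : Type := {S : Set (FreeGroup (Fin n)) // IsTree S}

variable {n : ℕ}

/-- The pattern `B_S(m)` of radius `m` of a pointed tree. -/
def ball (S : X n) (m : ℕ) : Set (FreeGroup (Fin n)) := {g ∈ S.1 | wlen g ≤ m}

/-- The set of radii on which two pointed trees have the same pattern. -/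
def agreeSet (S S' : X n) : Set ℕ := {m | ball S m = ball S' m}

/-- The ball metric on the space of pointed trees. -/
def tdist (S S' : X n) : ℝ :=
  letI := Classical.propDecidable (S = S')
  if S = S' then 0 else Real.exp (-((sSup (agreeSet S S') : ℕ) : ℝ))

theorem tdist_eq_of_ne {x y : X n} (h : x ≠ y) :
    tdist x y = Real.exp (-((sSup (agreeSet x y) : ℕ) : ℝ)) := by
  unfold tdist
  rw [if_neg h]

theorem ball_mono_eq {x y : X n} {k m : ℕ} (hkm : k ≤ m)
    (h : ball x m = ball y m) : ball x k = ball y k := by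
  ext g
  constructor
  · rintro ⟨hg, hlen⟩
    have hx : g ∈ ball x m := ⟨hg, hlen.trans hkm⟩
    rw [h] at hx
    exact ⟨hx.1, hlen⟩
  · rintro ⟨hg, hlen⟩
    have hy : g ∈ ball y m := ⟨hg, hlen.trans hkm⟩
    rw [← h] at hy
    exact ⟨hy.1, hlen⟩

theorem eq_of_agree_all {x y : X n} (h : ∀ m, ball x m = ball y m) : x = y := by
  apply Subtype.ext
  ext g
  constructor
  · intro hg
    have hx : g ∈ ball x (wlen g) := ⟨hg, le_rfl⟩
    rw [h] at hx
    exact hx.1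
  · intro hg
    have hy : g ∈ ball y (wlen g) := ⟨hg, le_rfl⟩
    rw [← h] at hy
    exact hy.1

theorem bddAbove_agreeSet {x y : X n} (h : x ≠ y) : BddAbove (agreeSet x y) := by
  by_contra hb
  refine h (eq_of_agree_all fun m => ?_)
  rcases not_bddAbove_iff.mp hb m with ⟨k, hk, hmk⟩
  exact ball_mono_eq hmk.le hk

theorem ball_zero (x : X n) : ball x 0 = {1} := by
  ext g
  simp only [ball, Set.mem_setOf_eq, Nat.le_zero, Set.mem_singleton_iff]
  constructor
  · rintro ⟨hg, hlen⟩
    exact FreeGroup.toWord_eq_nil_iff.mp (List.length_eq_zero_iff.mp hlen)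
  · rintro rfl
    exact ⟨x.2.1, by simp [wlen]⟩

theorem zero_mem_agreeSet (x y : X n) : (0 : ℕ) ∈ agreeSet x y := by
  show ball x 0 = ball y 0
  rw [ball_zero, ball_zero]

theorem tdist_nonneg (x y : X n) : 0 ≤ tdist x y := by
  rcases eq_or_ne x y with rfl | h
  · unfold tdist
    rw [if_pos rfl]
  · rw [tdist_eq_of_ne h]
    exact (Real.exp_pos _).le

theorem tdist_self (x : X n) : tdist x x = 0 := by
  unfold tdist
  rw [if_pos rfl]

theorem tdist_comm (x y : X n) : tdist x y = tdist y x := by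
  by_cases h : x = y
  · subst h; rfl
  · have hs : agreeSet x y = agreeSet y x := by
      ext m
      exact eq_comm
    rw [tdist_eq_of_ne h, tdist_eq_of_ne (Ne.symm h), hs]

theorem tdist_ultra (x y z : X n) : tdist x z ≤ max (tdist x y) (tdist y z) := by
  rcases eq_or_ne x z with rfl | hxz
  · exact le_max_of_le_left (by rw [tdist_self]; exact tdist_nonneg x y)
  rcases eq_or_ne x y with rfl | hxy
  · exact le_max_of_le_right le_rfl
  rcases eq_or_ne y z with rfl | hyz
  · exact le_max_of_le_left le_rfl
  have hbxy := bddAbove_agreeSet hxy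
  have hbyz := bddAbove_agreeSet hyz
  have hbxz := bddAbove_agreeSet hxz
  have hma : sSup (agreeSet x y) ∈ agreeSet x y :=
    Nat.sSup_mem ⟨0, zero_mem_agreeSet x y⟩ hbxy
  have hmb : sSup (agreeSet y z) ∈ agreeSet y z :=
    Nat.sSup_mem ⟨0, zero_mem_agreeSet y z⟩ hbyz
  have hmin : min (sSup (agreeSet x y)) (sSup (agreeSet y z)) ∈ agreeSet x z := by
    have h1 : ball x (min (sSup (agreeSet x y)) (sSup (agreeSet y z)))
        = ball y (min (sSup (agreeSet x y)) (sSup (agreeSet y z))) :=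
      ball_mono_eq (min_le_left _ _) hma
    have h2 : ball y (min (sSup (agreeSet x y)) (sSup (agreeSet y z)))
        = ball z (min (sSup (agreeSet x y)) (sSup (agreeSet y z))) :=
      ball_mono_eq (min_le_right _ _) hmb
    exact h1.trans h2
  have hle : min (sSup (agreeSet x y)) (sSup (agreeSet y z)) ≤ sSup (agreeSet x z) :=
    le_csSup hbxz hmin
  rw [tdist_eq_of_ne hxz, tdist_eq_of_ne hxy, tdist_eq_of_ne hyz]
  rcases le_total (sSup (agreeSet x y)) (sSup (agreeSet y z)) with hab | hab
  · refine le_max_of_le_left (Real.exp_le_exp.mpr ?_)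
    have h2 : ((sSup (agreeSet x y) : ℕ) : ℝ) ≤ ((sSup (agreeSet x z) : ℕ) : ℝ) := by
      exact_mod_cast (min_eq_left hab) ▸ hle
    linarith
  · refine le_max_of_le_right (Real.exp_le_exp.mpr ?_)
    have h2 : ((sSup (agreeSet y z) : ℕ) : ℝ) ≤ ((sSup (agreeSet x z) : ℕ) : ℝ) := by
      exact_mod_cast (min_eq_right hab) ▸ hle
    linarith

theorem tdist_triangle (x y z : X n) : tdist x z ≤ tdist x y + tdist y z :=
  (tdist_ultra x y z).trans
    (max_le (le_add_of_nonneg_right (tdist_nonneg y z))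
      (le_add_of_nonneg_left (tdist_nonneg x y)))

instance : MetricSpace (X n) where
  dist := tdist
  dist_self := tdist_self
  dist_comm := tdist_comm
  dist_triangle := tdist_triangle
  eq_of_dist_eq_zero := by
    intro x y h
    by_contra hne
    have h' : tdist x y = 0 := h
    rw [tdist_eq_of_ne hne] at h'
    exact (Real.exp_pos _).ne' h'

theorem dist_eq_tdist (x y : X n) : dist x y = tdist x y := rfl

/-- The translate `S · g` of a tree `S` by a vertex `g ∈ S`. -/
def translate {n : ℕ} (S : Set (FreeGroup (Fin n))) (g : FreeGroup (Fin n)) :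
    Set (FreeGroup (Fin n)) := (fun h => g⁻¹ * h) '' S

/-- The orbit `O(S) = {S · g : g ∈ S}` of a pointed tree under the pseudogroup action. -/
def orbit (S : X n) : Set (X n) := {S' | ∃ g ∈ S.1, S'.1 = translate S.1 g}

/-- A subset `Y ⊆ X n` is invariant under the pseudogroup action. -/
def Invariant (Y : Set (X n)) : Prop :=
  ∀ S ∈ Y, ∀ g ∈ S.1, ∀ S' : X n, S'.1 = translate S.1 g → S' ∈ Y

/-- `Λ(Z, m)`: the number of distinct patterns of radius `m` of trees in `Z`. -/
def Lam (Z : Set (X n)) (m : ℕ) : ℕ := ((fun S => ball S m) '' Z).ncard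

/-- The lower box dimension of a subset of the space of pointed trees. -/
def lowerBox (Z : Set (X n)) : ℝ≥0∞ :=
  Filter.liminf (fun m : ℕ => ENNReal.ofReal (Real.log (Lam Z m)) / (m : ℝ≥0∞)) Filter.atTop

/-- The upper box dimension of a subset of the space of pointed trees. -/
def upperBox (Z : Set (X n)) : ℝ≥0∞ :=
  Filter.limsup (fun m : ℕ => ENNReal.ofReal (Real.log (Lam Z m)) / (m : ℝ≥0∞)) Filter.atTop



/-! ### Auxiliary constructions for the proof -/

section Aux

lemma prefix_append_cases {α : Type*} {L L1 L2 : List α} (h : L <+: L1 ++ L2) :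
    L <+: L1 ∨ ∃ M, L = L1 ++ M ∧ M <+: L2 := by
  by_cases hl : L.length ≤ L1.length
  · left; exact (List.isPrefix_append_of_length hl).mp h
  · right
    have hL : L = (L1 ++ L2).take L.length := List.prefix_iff_eq_take.mp h
    rw [List.take_append, List.take_of_length_le (by omega)] at hL
    exact ⟨L2.take (L.length - L1.length), hL, List.take_prefix _ _⟩

lemma prefix_replicate {α : Type*} {L : List α} {n : ℕ} {x : α}
    (h : L <+: List.replicate n x) :
    L = List.replicate L.length x ∧ L.length ≤ n := by
  constructor
  · exact List.eq_replicate_length.mpr fun b hb =>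
      List.eq_of_mem_replicate (h.sublist.subset hb)
  · simpa using h.length_le

abbrev gA : Fin 2 × Bool := (0, true)
abbrev gB : Fin 2 × Bool := (1, true)

lemma reduce_pos {L : List (Fin 2 × Bool)} (h : ∀ x ∈ L, x.2 = true) :
    FreeGroup.reduce L = L := by
  induction L with
  | nil => rfl
  | cons x t ih =>
    have ht := ih fun y hy => h y (List.mem_cons_of_mem _ hy)
    rw [FreeGroup.reduce.cons, ht]
    cases t with
    | nil => rfl
    | cons y t2 =>
      have hx := h x List.mem_cons_self
      have hy := h y (List.mem_cons_of_mem _ List.mem_cons_self)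
      simp [hx, hy]

def wPQ (p q : ℕ) : List (Fin 2 × Bool) := List.replicate p gA ++ List.replicate q gB
def wLeaf (p q : ℕ) : List (Fin 2 × Bool) :=
  List.replicate p gA ++ List.replicate (q + 1) gB ++ [gA]

lemma pos_wPQ (p q : ℕ) : ∀ x ∈ wPQ p q, x.2 = true := by
  intro x hx
  rcases List.mem_append.mp hx with h | h <;>
    simp [List.eq_of_mem_replicate h]

lemma pos_wLeaf (p q : ℕ) : ∀ x ∈ wLeaf p q, x.2 = true := by
  intro x hx
  rcases List.mem_append.mp hx with h | h
  · rcases List.mem_append.mp h with h' | h' <;> simp [List.eq_of_mem_replicate h']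
  · simp_all [wLeaf]

def ePQ (p q : ℕ) : FreeGroup (Fin 2) := FreeGroup.mk (wPQ p q)
def eLeaf (p q : ℕ) : FreeGroup (Fin 2) := FreeGroup.mk (wLeaf p q)

lemma toWord_ePQ (p q : ℕ) : (ePQ p q).toWord = wPQ p q := by
  rw [ePQ, FreeGroup.toWord_mk]; exact reduce_pos (pos_wPQ p q)

lemma toWord_eLeaf (p q : ℕ) : (eLeaf p q).toWord = wLeaf p q := by
  rw [eLeaf, FreeGroup.toWord_mk]; exact reduce_pos (pos_wLeaf p q)

lemma len_wPQ (p q : ℕ) : (wPQ p q).length = p + q := by simp [wPQ]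
lemma len_wLeaf (p q : ℕ) : (wLeaf p q).length = p + q + 2 := by simp [wLeaf]; omega

lemma wlen_eLeaf (p q : ℕ) : wlen (eLeaf p q) = p + q + 2 := by
  rw [wlen, toWord_eLeaf, len_wLeaf]

lemma toWord_prefix {h g : FreeGroup (Fin 2)} (hp : IsPref h g) :
    h.toWord <+: g.toWord := by
  have hsub : List.Sublist ((h * (h⁻¹ * g)).toWord) (h.toWord ++ (h⁻¹ * g).toWord) :=
    FreeGroup.toWord_mul_sublist _ _
  rw [mul_inv_cancel_left] at hsub
  have hlen : g.toWord.length = (h.toWord ++ (h⁻¹ * g).toWord).length := by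
    rw [List.length_append]; exact hp.symm
  have := hsub.eq_of_length hlen
  rw [this]
  exact ⟨_, rfl⟩

lemma eLeaf_ne_ePQ (p q p' q' : ℕ) : eLeaf p q ≠ ePQ p' q' := by
  intro h
  have hw : wLeaf p q = wPQ p' q' := by
    have := congrArg FreeGroup.toWord h
    rwa [toWord_eLeaf, toWord_ePQ] at this
  rcases Nat.eq_zero_or_pos q' with rfl | hq'
  · have hmem : gB ∈ wLeaf p q := by
      simp [wLeaf, List.mem_append]
    rw [hw] at hmem
    have : gB ∈ List.replicate p' gA := by simpa [wPQ] using hmem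
    exact absurd (List.eq_of_mem_replicate this) (by decide)
  · obtain ⟨q'', rfl⟩ := Nat.exists_eq_add_of_lt (Nat.lt_of_lt_of_le Nat.zero_lt_one hq')
    have h1 : (wLeaf p q).getLast? = some gA := by
      rw [wLeaf]; exact List.getLast?_concat
    have h2 : (wPQ p' (0 + q'' + 1)).getLast? = some gB := by
      rw [wPQ, List.replicate_succ', ← List.append_assoc]
      exact List.getLast?_concat
    rw [hw, h2] at h1
    exact absurd (Option.some_injective _ h1) (by decide)

lemma eLeaf_injective : Function.Injective (fun pq : ℕ × ℕ => eLeaf pq.1 pq.2) := by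
  rintro ⟨p, q⟩ ⟨p', q'⟩ h
  have hw : wLeaf p q = wLeaf p' q' := by
    have := congrArg FreeGroup.toWord h
    rwa [toWord_eLeaf, toWord_eLeaf] at this
  have hc : (wLeaf p q).count gB = (wLeaf p' q').count gB := by rw [hw]
  have hl : (wLeaf p q).length = (wLeaf p' q').length := by rw [hw]
  rw [len_wLeaf, len_wLeaf] at hl
  simp only [wLeaf, List.count_append, List.count_replicate, List.count_singleton] at hc
  norm_num at hc
  simp only [Prod.mk.injEq]
  omega

/-- The "comb" base tree `{a^p b^q}` together with a set of decorating leaves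
`a^p b^(q+1) a`. -/
def TreeSet (A : Set (ℕ × ℕ)) : Set (FreeGroup (Fin 2)) :=
  {g | ∃ p q, g = ePQ p q} ∪ {g | ∃ pq ∈ A, g = eLeaf pq.1 pq.2}

lemma ePQ_mem_TreeSet (A : Set (ℕ × ℕ)) (p q : ℕ) : ePQ p q ∈ TreeSet A :=
  Or.inl ⟨p, q, rfl⟩

lemma eLeaf_mem_TreeSet_iff (A : Set (ℕ × ℕ)) (p q : ℕ) :
    eLeaf p q ∈ TreeSet A ↔ (p, q) ∈ A := by
  constructor
  · rintro (⟨p', q', h⟩ | ⟨pq, hpq, h⟩)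
    · exact absurd h (eLeaf_ne_ePQ p q p' q')
    · have := eLeaf_injective (a₁ := (p, q)) (a₂ := pq) h
      rwa [this]
  · intro h; exact Or.inr ⟨(p, q), h, rfl⟩

/-- A reduced-word prefix of a member of `TreeSet A` is again a member. -/
lemma TreeSet_prefix_closed (A : Set (ℕ × ℕ)) {g h : FreeGroup (Fin 2)}
    (hg : g ∈ TreeSet A) (hp : IsPref h g) : h ∈ TreeSet A := by
  have hpre := toWord_prefix hp
  have hmk : h = FreeGroup.mk h.toWord := FreeGroup.mk_toWord.symm
  rcases hg with ⟨p, q, rfl⟩ | ⟨pq, hpq, rfl⟩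
  · rw [toWord_ePQ, wPQ] at hpre
    rcases prefix_append_cases hpre with h1 | ⟨M, hM, h2⟩
    · obtain ⟨h1', _⟩ := prefix_replicate h1
      refine Or.inl ⟨h.toWord.length, 0, ?_⟩
      conv_lhs => rw [hmk, h1']
      simp [ePQ, wPQ]
    · obtain ⟨h2', _⟩ := prefix_replicate h2
      refine Or.inl ⟨p, M.length, ?_⟩
      conv_lhs => rw [hmk, hM, h2']
      simp [ePQ, wPQ]
  · rw [toWord_eLeaf, wLeaf, List.append_assoc] at hpre
    rcases prefix_append_cases hpre with h1 | ⟨M, hM, h2⟩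
    · obtain ⟨h1', _⟩ := prefix_replicate h1
      refine Or.inl ⟨h.toWord.length, 0, ?_⟩
      conv_lhs => rw [hmk, h1']
      simp [ePQ, wPQ]
    · rcases prefix_append_cases h2 with h3 | ⟨M', hM', h4⟩
      · obtain ⟨h3', _⟩ := prefix_replicate h3
        refine Or.inl ⟨pq.1, M.length, ?_⟩
        conv_lhs => rw [hmk, hM, h3']
        simp [ePQ, wPQ]
      · have h4' := prefix_replicate (x := gA) (n := 1) (by simpa using h4)
        rcases Nat.le_one_iff_eq_zero_or_eq_one.mp h4'.2 with h5 | h5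
        · have : M' = [] := List.length_eq_zero_iff.mp h5
          subst this
          refine Or.inl ⟨pq.1, pq.2 + 1, ?_⟩
          conv_lhs => rw [hmk, hM, hM']
          simp [ePQ, wPQ]
        · have : M' = [gA] := by rw [h4'.1, h5]; rfl
          subst this
          refine Or.inr ⟨pq, hpq, ?_⟩
          conv_lhs => rw [hmk, hM, hM']
          simp [eLeaf, wLeaf, List.append_assoc]

lemma isTree_TreeSet (A : Set (ℕ × ℕ)) : IsTree (TreeSet A) := by
  refine ⟨?_, ?_, ?_⟩
  · refine Or.inl ⟨0, 0, ?_⟩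
    rw [ePQ, wPQ]
    simp [FreeGroup.one_eq_mk]
  · refine Set.infinite_of_injective_forall_mem
      (f := fun p : ℕ => ePQ p 0) ?_ fun p => ePQ_mem_TreeSet A p 0
    intro p p' h
    have := congrArg (fun g => (FreeGroup.toWord g).length) h
    simpa [toWord_ePQ, len_wPQ] using this
  · intro g hg h hp
    exact TreeSet_prefix_closed A hg hp

end Aux

section Series

def w (i : ℕ) : ℝ := (2 : ℝ)⁻¹ ^ (i + 1)

lemma w_nonneg (i : ℕ) : 0 ≤ w i := by unfold w; positivity

lemma summable_w : Summable w := by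
  have : Summable (fun i : ℕ => (2 : ℝ)⁻¹ ^ i) :=
    summable_geometric_of_lt_one (by norm_num) (by norm_num)
  have h2 := this.mul_right (2 : ℝ)⁻¹
  refine h2.congr fun i => ?_
  simp [w, pow_succ]

lemma tsum_w : ∑' i, w i = 1 := by
  have h : ∑' i : ℕ, (2 : ℝ)⁻¹ ^ i = 2 := by
    rw [tsum_geometric_of_lt_one (by norm_num) (by norm_num)]; norm_num
  calc ∑' i, w i = ∑' i : ℕ, (2 : ℝ)⁻¹ ^ i * 2⁻¹ := by simp [w, pow_succ]
    _ = 2 * 2⁻¹ := by rw [tsum_mul_right, h]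
    _ = 1 := by norm_num

lemma summable_ite (P : ℕ → Prop) [DecidablePred P] :
    Summable fun i => if P i then w i else 0 := by
  refine Summable.of_nonneg_of_le (fun i => ?_) (fun i => ?_) summable_w
  · split <;> simp [w_nonneg]
  · split <;> simp [w_nonneg]

lemma tsum_tail (N : ℕ) : ∑' i, (if i < N then (0:ℝ) else w i) = (2:ℝ)⁻¹ ^ N := by
  have hs : Summable fun i => if i < N then (0:ℝ) else w i := by
    refine Summable.of_nonneg_of_le (fun i => ?_) (fun i => ?_) summable_w
    · split
      · exact le_rfl
      · exact w_nonneg i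
    · split
      · exact w_nonneg i
      · exact le_rfl
  have h1 := Summable.sum_add_tsum_nat_add (f := fun i => if i < N then (0:ℝ) else w i) N hs
  have h2 : ∀ i ∈ Finset.range N, (if i < N then (0:ℝ) else w i) = 0 := by
    intro i hi; rw [if_pos (Finset.mem_range.mp hi)]
  rw [Finset.sum_congr rfl h2] at h1
  simp only [Finset.sum_const_zero, zero_add] at h1
  rw [← h1]
  have h3 : ∀ i : ℕ, (if i + N < N then (0:ℝ) else w (i + N)) = (2:ℝ)⁻¹ ^ N * w i := by
    intro i
    rw [if_neg (by omega)]
    simp [w, pow_add, pow_succ]; ring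
  rw [tsum_congr h3, tsum_mul_left, tsum_w, mul_one]

open scoped Classical in
/-- The doubling iteration. -/
def yseq (x : ℝ) : ℕ → ℝ
  | 0 => x
  | n + 1 => 2 * yseq x n - if 2⁻¹ ≤ yseq x n then 1 else 0

open scoped Classical in
/-- Binary expansion of a real number in `[0,1]`. -/
lemma exists_digits {x : ℝ} (h0 : 0 ≤ x) (h1 : x ≤ 1) :
    ∃ ε : ℕ → Bool, ∑' i, (if ε i = true then w i else 0) = x := by
  classical
  set y : ℕ → ℝ := yseq x with hy
  have hy0 : y 0 = x := rfl
  have hstep : ∀ n, y (n + 1) = 2 * y n - if 2⁻¹ ≤ y n then 1 else 0 := by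
    intro n
    rw [hy]
    rfl
  have hbound : ∀ n, 0 ≤ y n ∧ y n ≤ 1 := by
    intro n
    induction n with
    | zero => exact ⟨h0, h1⟩
    | succ n ih =>
      rw [hstep]
      split <;> constructor <;> [linarith [ih.2]; linarith [ih.2]; linarith [ih.1]; skip]
      · rename_i h; push_neg at h; linarith
  refine ⟨fun n => if 2⁻¹ ≤ y n then true else false, ?_⟩
  set ε : ℕ → Bool := fun n => if 2⁻¹ ≤ y n then true else false with hε
  have hpart : ∀ n, x = (∑ i ∈ Finset.range n, (if ε i = true then w i else 0))
      + y n * (2:ℝ)⁻¹ ^ n := by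
    intro n
    induction n with
    | zero => simp [hy0]
    | succ n ih =>
      rw [Finset.sum_range_succ]
      have : (if ε n = true then w n else 0)
          = (if 2⁻¹ ≤ y n then (1:ℝ) else 0) * (2:ℝ)⁻¹ ^ (n+1) := by
        simp only [hε, w]
        by_cases hc : 2⁻¹ ≤ y n <;> simp [hc]
      rw [this, hstep]
      rw [ih]
      ring
  have hsum : Summable fun i => if ε i = true then w i else 0 := summable_ite _
  have htend : Filter.Tendsto (fun n => ∑ i ∈ Finset.range n, (if ε i = true then w i else 0))
      Filter.atTop (nhds x) := by
    have hgeo : Filter.Tendsto (fun n : ℕ => y n * (2:ℝ)⁻¹ ^ n) Filter.atTop (nhds 0) := by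
      have h2 : Filter.Tendsto (fun n : ℕ => (2:ℝ)⁻¹ ^ n) Filter.atTop (nhds 0) :=
        tendsto_pow_atTop_nhds_zero_of_lt_one (by norm_num) (by norm_num)
      refine squeeze_zero (fun n => mul_nonneg (hbound n).1 (by positivity))
        (fun n => ?_) h2
      have := (hbound n).2
      nlinarith [pow_nonneg (by norm_num : (0:ℝ) ≤ 2⁻¹) n]
    have : (fun n => ∑ i ∈ Finset.range n, (if ε i = true then w i else 0))
        = fun n => x - y n * (2:ℝ)⁻¹ ^ n := by
      funext n; have := hpart n; linarith
    rw [this]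
    simpa using Filter.Tendsto.sub (tendsto_const_nhds (x := x)) hgeo
  exact tendsto_nhds_unique hsum.hasSum.tendsto_sum_nat htend

end Series

section Dim

open scoped Classical

/-- Position indices: digit `i` is stored at the leaf `eLeaf (pI k i) (qI k i)`,
whose word length is `i / k + k + 1`. -/
def pI (k i : ℕ) : ℕ := i / k + (k - 1 - i % k)
def qI (k i : ℕ) : ℕ := i % k

lemma wlen_leafI {k : ℕ} (hk : 0 < k) (i : ℕ) :
    wlen (eLeaf (pI k i) (qI k i)) = i / k + k + 1 := by
  rw [wlen_eLeaf]
  have := Nat.mod_lt i hk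
  unfold pI qI
  omega

lemma idx_inj {k : ℕ} (hk : 0 < k) {i j : ℕ}
    (h : (pI k i, qI k i) = (pI k j, qI k j)) : i = j := by
  have hq : i % k = j % k := congrArg Prod.snd h
  have hp : pI k i = pI k j := congrArg Prod.fst h
  have h1 := Nat.mod_lt i hk
  have h2 := Nat.mod_lt j hk
  have hd : i / k = j / k := by
    unfold pI at hp
    omega
  have e1 := Nat.div_add_mod i k
  have e2 := Nat.div_add_mod j k
  rw [← e1, ← e2, hd, hq]

open scoped Classical in
/-- The digit-reading map `X 2 → ℝ`. -/
def fmap (k : ℕ) (S : X 2) : ℝ :=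
  ∑' i, if eLeaf (pI k i) (qI k i) ∈ S.1 then w i else 0

lemma summable_fmap_term (k : ℕ) (S : X 2) :
    Summable fun i => if eLeaf (pI k i) (qI k i) ∈ S.1 then w i else 0 := by
  classical
  exact summable_ite _

lemma fmap_nonneg (k : ℕ) (S : X 2) : 0 ≤ fmap k S := by
  classical
  refine tsum_nonneg fun i => ?_
  split <;> simp [w_nonneg]

/-- Key estimate: if the two trees have equal digits below `N`, the values of `fmap`
are `2⁻¹ ^ N`-close. -/
lemma abs_fmap_sub_le (k : ℕ) (S S' : X 2) (N : ℕ)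
    (h : ∀ i < N, (eLeaf (pI k i) (qI k i) ∈ S.1 ↔ eLeaf (pI k i) (qI k i) ∈ S'.1)) :
    |fmap k S - fmap k S'| ≤ (2:ℝ)⁻¹ ^ N := by
  classical
  set u : ℕ → ℝ := fun i => if eLeaf (pI k i) (qI k i) ∈ S.1 then w i else 0 with hu
  set v : ℕ → ℝ := fun i => if eLeaf (pI k i) (qI k i) ∈ S'.1 then w i else 0 with hv
  have hsu : Summable u := summable_fmap_term k S
  have hsv : Summable v := summable_fmap_term k S'
  have hsub : fmap k S - fmap k S' = ∑' i, (u i - v i) := (Summable.tsum_sub hsu hsv).symm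
  have habs : ∀ i, |u i - v i| ≤ (if i < N then (0:ℝ) else w i) := by
    intro i
    by_cases hi : i < N
    · rw [if_pos hi]
      have : u i = v i := by
        rw [hu, hv]
        simp only
        by_cases hm : eLeaf (pI k i) (qI k i) ∈ S.1
        · rw [if_pos hm, if_pos ((h i hi).mp hm)]
        · rw [if_neg hm, if_neg (fun hm' => hm ((h i hi).mpr hm'))]
      simp [this]
    · rw [if_neg hi]
      have hb : ∀ (P : Prop) (_ : Decidable P),
          0 ≤ (if P then w i else 0) ∧ (if P then w i else 0) ≤ w i := by
        intro P hP
        constructor <;> split <;> simp [w_nonneg]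
      have h1 : 0 ≤ u i ∧ u i ≤ w i := by rw [hu]; exact hb _ _
      have h2 : 0 ≤ v i ∧ v i ≤ w i := by rw [hv]; exact hb _ _
      rw [abs_le]
      constructor <;> linarith [h1.1, h1.2, h2.1, h2.2]
  have hcmp : Summable fun i => if i < N then (0:ℝ) else w i := by
    refine Summable.of_nonneg_of_le (fun i => ?_) (fun i => ?_) summable_w
    · split <;> simp [w_nonneg]
    · split <;> simp [w_nonneg]
  have hsd : Summable fun i => ‖u i - v i‖ := by
    refine Summable.of_nonneg_of_le (fun i => norm_nonneg _) (fun i => ?_) hcmp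
    exact (Real.norm_eq_abs (u i - v i)).le.trans
      (le_trans (le_of_eq (Real.norm_eq_abs _)) (habs i))
  calc |fmap k S - fmap k S'| = ‖∑' i, (u i - v i)‖ := by
        rw [hsub, Real.norm_eq_abs]
      _ ≤ ∑' i, ‖u i - v i‖ := norm_tsum_le_tsum_norm hsd
      _ ≤ ∑' i, (if i < N then (0:ℝ) else w i) := by
        refine Summable.tsum_le_tsum (fun i => ?_) hsd ?_
        · rw [Real.norm_eq_abs]; exact habs i
        · exact hcmp
      _ = (2:ℝ)⁻¹ ^ N := tsum_tail N

lemma fmap_le_one (k : ℕ) (S : X 2) : fmap k S ≤ 1 := by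
  classical
  rw [← tsum_w]
  refine Summable.tsum_le_tsum (fun i => ?_) (summable_fmap_term k S) summable_w
  split <;> simp [w_nonneg]

end Dim


section Final

open scoped Classical NNReal

/-- The digit-reading map is Hölder with exponent `k * log 2`. -/
lemma holder_fmap {k : ℕ} (hk : 0 < k) :
    HolderOnWith ((2:ℝ≥0) ^ (k * k)) (Real.toNNReal (k * Real.log 2)) (fmap k)
      Set.univ := by
  intro x _ y _
  rcases eq_or_ne x y with rfl | hne
  · simp
  set m := sSup (agreeSet x y) with hmdef
  have hball : ball x m = ball y m :=
    Nat.sSup_mem ⟨0, zero_mem_agreeSet x y⟩ (bddAbove_agreeSet hne)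
  set N := k * (m - k) with hN
  clear_value N m
  have hdig : ∀ i < N, (eLeaf (pI k i) (qI k i) ∈ x.1 ↔ eLeaf (pI k i) (qI k i) ∈ y.1) := by
    intro i hi
    have hq : i / k < m - k := by
      rw [Nat.div_lt_iff_lt_mul hk, Nat.mul_comm]
      omega
    have hwl : wlen (eLeaf (pI k i) (qI k i)) ≤ m := by
      rw [wlen_leafI hk]
      generalize hgen : i / k = dd at hq ⊢
      omega
    constructor
    · intro hmem
      have hb : eLeaf (pI k i) (qI k i) ∈ ball x m := ⟨hmem, hwl⟩
      rw [hball] at hb; exact hb.1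
    · intro hmem
      have hb : eLeaf (pI k i) (qI k i) ∈ ball y m := ⟨hmem, hwl⟩
      rw [← hball] at hb; exact hb.1
  have habs := abs_fmap_sub_le k x y N hdig
  -- the real-number estimate
  have hrc : ((Real.toNNReal (k * Real.log 2) : ℝ≥0) : ℝ) = k * Real.log 2 :=
    Real.coe_toNNReal _ (by positivity)
  have hexp : Real.exp (-(m:ℝ)) ^ ((Real.toNNReal (k * Real.log 2) : ℝ≥0) : ℝ)
      = (2:ℝ) ^ (-((m:ℤ) * k)) := by
    rw [hrc, ← Real.exp_mul]
    have h1 : (-(m:ℝ)) * ((k:ℝ) * Real.log 2) = Real.log 2 * ((-((m:ℤ) * k) : ℤ) : ℝ) := by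
      push_cast; ring
    rw [h1, Real.exp_mul, Real.exp_log (by norm_num : (0:ℝ) < 2), Real.rpow_intCast]
  have h4 : (m : ℤ) * k ≤ (N:ℤ) + ((k * k : ℕ) : ℤ) := by
    have h4' : m * k ≤ N + k * k := by
      rcases le_total k m with h | h
      · have h5 : N + k * k = m * k := by
          rw [hN, ← Nat.mul_add, Nat.sub_add_cancel h, Nat.mul_comm]
        omega
      · have h6 : m * k ≤ k * k := Nat.mul_le_mul_right k h
        omega
    exact_mod_cast h4'
  have hner : (2:ℝ)⁻¹ ^ N ≤ (2:ℝ) ^ (k * k) * (2:ℝ) ^ (-((m:ℤ) * k)) := by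
    have h2 : (2:ℝ)⁻¹ ^ N = (2:ℝ) ^ (-(N:ℤ)) := by
      rw [inv_pow, zpow_neg, zpow_natCast]
    have h3 : (2:ℝ) ^ (k * k) * (2:ℝ) ^ (-((m:ℤ) * k))
        = (2:ℝ) ^ (((k * k : ℕ) : ℤ) + -((m:ℤ) * k)) := by
      rw [zpow_add₀ (by norm_num : (2:ℝ) ≠ 0), zpow_natCast]
    rw [h2, h3]
    exact zpow_le_zpow_right₀ one_le_two (by linarith)
  have hC : ((2 ^ (k * k) : ℝ≥0) : ℝ≥0∞) = ENNReal.ofReal ((2:ℝ) ^ (k * k)) := by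
    rw [ENNReal.ofReal_pow (by norm_num : (0:ℝ) ≤ 2), ENNReal.coe_pow]
    norm_num
  rw [edist_dist, edist_dist, dist_eq_tdist x y, tdist_eq_of_ne hne,
    ENNReal.ofReal_rpow_of_pos (Real.exp_pos _), hC,
    ← ENNReal.ofReal_mul (by positivity)]
  refine ENNReal.ofReal_le_ofReal ?_
  rw [Real.dist_eq, ← hmdef]
  calc |fmap k x - fmap k y| ≤ (2:ℝ)⁻¹ ^ N := habs
    _ ≤ (2:ℝ) ^ (k * k) * (2:ℝ) ^ (-((m:ℤ) * k)) := hner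
    _ = (2:ℝ) ^ (k * k) * Real.exp (-(m:ℝ)) ^ ((Real.toNNReal (k * Real.log 2) : ℝ≥0) : ℝ) := by
      rw [hexp]

/-- Every point of `[0,1]` is a value of the digit-reading map. -/
lemma surj_fmap {k : ℕ} (hk : 0 < k) :
    Set.Icc (0:ℝ) 1 ⊆ fmap k '' Set.univ := by
  rintro x ⟨h0, h1⟩
  obtain ⟨ε, hε⟩ := exists_digits h0 h1
  set A : Set (ℕ × ℕ) := {pq | ∃ i, ε i = true ∧ pq = (pI k i, qI k i)} with hA
  refine ⟨⟨TreeSet A, isTree_TreeSet A⟩, Set.mem_univ _, ?_⟩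
  unfold fmap
  rw [← hε]
  refine tsum_congr fun i => ?_
  have hmem : eLeaf (pI k i) (qI k i) ∈ TreeSet A ↔ ε i = true := by
    rw [eLeaf_mem_TreeSet_iff]
    constructor
    · rintro ⟨j, hj, hji⟩
      rw [idx_inj hk hji]
      exact hj
    · intro h; exact ⟨i, h, rfl⟩
  by_cases hc : ε i = true
  · rw [if_pos hc, if_pos (hmem.mpr hc)]
  · rw [if_neg hc, if_neg (fun hx => hc (hmem.mp hx))]

end Final

open scoped NNReal in
/-- The Hausdorff dimension of the space of pointed trees `(X_2, d_2)` associated to the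
free group on two generators is infinite. -/
theorem dimH_X_two_eq_top : dimH (Set.univ : Set (X 2)) = ⊤ := by
  by_contra hne
  obtain ⟨n, hn⟩ := ENNReal.exists_nat_gt hne
  set k := 2 * n + 2 with hk
  have hkpos : 0 < k := by omega
  set r : ℝ≥0 := Real.toNNReal (k * Real.log 2) with hr
  have hlog : (1:ℝ)/2 < Real.log 2 := by
    have := Real.log_two_gt_d9
    linarith
  have hrR : ((r : ℝ≥0) : ℝ) = k * Real.log 2 := Real.coe_toNNReal _ (by positivity)
  have hrpos : 0 < r := by
    rw [← NNReal.coe_lt_coe, hrR]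
    push_cast
    positivity
  have hH := holder_fmap (k := k) hkpos
  have h2 : dimH (Set.Icc (0:ℝ) 1) = 1 := by
    have hnb : Set.Icc (0:ℝ) 1 ∈ nhds (2⁻¹ : ℝ) :=
      Icc_mem_nhds (by norm_num) (by norm_num)
    rw [Real.dimH_of_mem_nhds hnb]
    simp
  have h3 : dimH (fmap k '' Set.univ) ≤ dimH (Set.univ : Set (X 2)) / r :=
    hH.dimH_image_le hrpos
  have h4 : (1:ℝ≥0∞) ≤ dimH (Set.univ : Set (X 2)) / r := by
    calc (1:ℝ≥0∞) = dimH (Set.Icc (0:ℝ) 1) := h2.symm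
      _ ≤ dimH (fmap k '' Set.univ) := dimH_mono (surj_fmap hkpos)
      _ ≤ _ := h3
  have h5 : (r : ℝ≥0∞) ≤ dimH (Set.univ : Set (X 2)) := by
    have := (ENNReal.le_div_iff_mul_le (Or.inl (by exact_mod_cast hrpos.ne'))
      (Or.inl ENNReal.coe_ne_top)).mp h4
    simpa using this
  have h6 : (n : ℝ≥0∞) ≤ (r : ℝ≥0∞) := by
    rw [← ENNReal.coe_natCast, ENNReal.coe_le_coe, ← NNReal.coe_le_coe, hrR]
    push_cast
    rw [show (k:ℝ) = 2 * n + 2 by exact_mod_cast hk]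
    nlinarith [hlog, (by norm_num : (0:ℝ) ≤ (n:ℝ)), Nat.cast_nonneg (α := ℝ) n,
      mul_pos (sub_pos.mpr hlog) (by positivity : (0:ℝ) < 2 * n + 2)]
  exact absurd (h6.trans h5) (not_le.mpr hn)

end GraphTrees
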